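/- Let μ be a product distribution on {0,1}^n, let f : {0,1}^n → {−1,+1}, and let T° be a bare tree with j leaves such that for every leaf l of T° the subfunction f_l is computable by a decision tree of depth at most D_opt and average depth at most Δ_opt (under the conditional product distribution at l). Then the leaf l* of maximum Score satisfies Score(l*) ≥ cost(T°)/(j·D_opt·Δ_opt). -/

import Mathlib

open Classical

/-- Binary decision trees over inputs in `Fin n → Bool`, with leaf labels in `L`.
A *bare tree* is a `DTree n Unit`; a labeled decision tree is a `DTree n Bool`
(`true` encoding `+1` and `false` encoding `-1`). -/
inductive DTree (n : ℕ) (L : Type) : Type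
  | leaf (label : L) : DTree n L
  | node (i : Fin n) (t0 t1 : DTree n L) : DTree n L

namespace DTree

variable {n : ℕ} {L : Type}

/-- The sequence of branching directions taken by the input `x` (root-to-leaf path). -/
def follow : DTree n L → (Fin n → Bool) → List Bool
  | .leaf _, _ => []
  | .node i t0 t1, x => x i :: (if x i then follow t1 x else follow t0 x)

/-- Addresses (root-to-leaf direction sequences) of all leaves of the tree. -/
def leafAddrs : DTree n L → List (List Bool)
  | .leaf _ => [[]]
  | .node _ t0 t1 =>
      (leafAddrs t0).map (fun s => false :: s) ++ (leafAddrs t1).map (fun s => true :: s)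

/-- Addresses of all internal nodes, together with the coordinate queried there. -/
def internals : DTree n L → List (List Bool × Fin n)
  | .leaf _ => []
  | .node i t0 t1 =>
      ([], i) :: ((internals t0).map (fun vj => (false :: vj.1, vj.2)) ++
        (internals t1).map (fun vj => (true :: vj.1, vj.2)))

/-- Addresses of all nodes (internal nodes and leaves). -/
def allAddrs : DTree n L → List (List Bool)
  | .leaf _ => [[]]
  | .node _ t0 t1 =>
      [] :: ((allAddrs t0).map (fun s => false :: s) ++ (allAddrs t1).map (fun s => true :: s))

/-- The coordinates queried along the path with direction sequence `s`. -/
def pathCoords : DTree n L → List Bool → List (Fin n)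
  | .leaf _, _ => []
  | .node _ _ _, [] => []
  | .node i t0 t1, b :: bs => i :: (if b then pathCoords t1 bs else pathCoords t0 bs)

/-- The substitution that fixes each coordinate queried along the path `s`
to the corresponding direction value. -/
def pathSubst : DTree n L → List Bool → (Fin n → Bool) → (Fin n → Bool)
  | .leaf _, _, x => x
  | .node _ _ _, [], x => x
  | .node i t0 t1, b :: bs, x =>
      if b then pathSubst t1 bs (Function.update x i true)
      else pathSubst t0 bs (Function.update x i false)

/-- Depth: maximum leaf depth. -/
def depth : DTree n L → ℕ
  | .leaf _ => 0
  | .node _ t0 t1 => max (depth t0) (depth t1) + 1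

/-- Evaluation of a labeled tree: the label of the leaf reached by `x`. -/
def eval : DTree n L → (Fin n → Bool) → L
  | .leaf b, _ => b
  | .node i t0 t1, x => if x i then eval t1 x else eval t0 x

/-- Replace the leaf at address `s` by an internal node querying coordinate `i`
(whose two children are leaves). -/
def splitAt : DTree n L → List Bool → Fin n → DTree n L
  | .leaf l, [], i => .node i (.leaf l) (.leaf l)
  | .leaf l, _ :: _, _ => .leaf l
  | .node j t0 t1, [], _ => .node j t0 t1
  | .node j t0 t1, b :: bs, i =>
      if b then .node j t0 (splitAt t1 bs i) else .node j (splitAt t0 bs i) t1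

/-- No coordinate is queried more than once on any root-to-leaf path. -/
def noRepeat : DTree n L → Prop
  | .leaf _ => True
  | .node i t0 t1 =>
      i ∉ (internals t0).map Prod.snd ∧ i ∉ (internals t1).map Prod.snd ∧
        noRepeat t0 ∧ noRepeat t1

end DTree

/-- The probability mass of the point `x` under the product distribution on
`Fin n → Bool` in which coordinate `i` equals `true` with probability `p i`. -/
noncomputable def prMass {n : ℕ} (p : Fin n → ℝ) (x : Fin n → Bool) : ℝ :=
  ∏ i, if x i then p i else 1 - p i

open Classical in
/-- The probability of the event `E` under the product distribution with biases `p`. -/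
noncomputable def prEvent {n : ℕ} (p : Fin n → ℝ) (E : (Fin n → Bool) → Prop) : ℝ :=
  ∑ x : Fin n → Bool, if E x then prMass p x else 0

/-- The influence of coordinate `i` on `f` under the product distribution with biases `p`:
`Pr[f x ≠ f x⁽ⁱ⁾]` where `x⁽ⁱ⁾` re-randomizes the `i`-th coordinate of `x`. -/
noncomputable def infl {n : ℕ} (p : Fin n → ℝ) (i : Fin n) (f : (Fin n → Bool) → Bool) : ℝ :=
  ∑ x : Fin n → Bool, prMass p x *
    ((if f x ≠ f (Function.update x i true) then p i else 0) +
     (if f x ≠ f (Function.update x i false) then 1 - p i else 0))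

/-- Total influence: the sum of the coordinate influences. -/
noncomputable def totalInf {n : ℕ} (p : Fin n → ℝ) (f : (Fin n → Bool) → Bool) : ℝ :=
  ∑ i, infl p i f

/-- Maximum coordinate influence. -/
noncomputable def maxInf {n : ℕ} (p : Fin n → ℝ) (f : (Fin n → Bool) → Bool) : ℝ :=
  ⨆ i : Fin n, infl p i f

/-- Expectation of the `±1` value of `f` (with `true ↦ 1`, `false ↦ -1`). -/
noncomputable def expVal {n : ℕ} (p : Fin n → ℝ) (f : (Fin n → Bool) → Bool) : ℝ :=
  ∑ x : Fin n → Bool, prMass p x * (if f x then 1 else -1)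

/-- Variance of the `±1`-valued function `f`: `1 - E[f]²`. -/
noncomputable def varOf {n : ℕ} (p : Fin n → ℝ) (f : (Fin n → Bool) → Bool) : ℝ :=
  1 - (expVal p f) ^ 2

/-- `error(f, ±1)`: the minority-value probability of `f`. -/
noncomputable def errOf {n : ℕ} (p : Fin n → ℝ) (f : (Fin n → Bool) → Bool) : ℝ :=
  min (prEvent p (fun x => f x = false)) (prEvent p (fun x => f x = true))

/-- `p_v` for a leaf `v` with address `s`: the probability that a random input reaches it. -/
noncomputable def reachLeaf {n : ℕ} {L : Type} (p : Fin n → ℝ) (T : DTree n L)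
    (s : List Bool) : ℝ :=
  prEvent p (fun x => T.follow x = s)

/-- `p_v` for an arbitrary node `v` with address `s`. -/
noncomputable def reachNode {n : ℕ} {L : Type} (p : Fin n → ℝ) (T : DTree n L)
    (s : List Bool) : ℝ :=
  prEvent p (fun x => s <+: T.follow x)

/-- The subfunction `f_v` at the node of `T` with address `s`: `f` with the
coordinates queried on the path to `v` fixed to their path values. -/
def subFun {n : ℕ} {L : Type} (f : (Fin n → Bool) → Bool) (T : DTree n L)
    (s : List Bool) : (Fin n → Bool) → Bool :=
  fun x => f (T.pathSubst s x)

/-- Average depth `Δ(T) = Σ_{leaves v} p_v · depth(v)`. -/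
noncomputable def avgDepth {n : ℕ} {L : Type} (p : Fin n → ℝ) (T : DTree n L) : ℝ :=
  ((T.leafAddrs).map (fun s => reachLeaf p T s * (s.length : ℝ))).sum

/-- `Score(v) = p_v · max_i Inf_i(f_v)` for a leaf `v` with address `s`. -/
noncomputable def score {n : ℕ} {L : Type} (p : Fin n → ℝ) (f : (Fin n → Bool) → Bool)
    (T : DTree n L) (s : List Bool) : ℝ :=
  reachLeaf p T s * maxInf p (subFun f T s)

/-- `cost(T°) = Σ_{leaves v} p_v · Inf(f_v)`. -/
noncomputable def cost {n : ℕ} {L : Type} (p : Fin n → ℝ) (f : (Fin n → Bool) → Bool)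
    (T : DTree n L) : ℝ :=
  ((T.leafAddrs).map (fun s => reachLeaf p T s * totalInf p (subFun f T s))).sum

/-- The error of the `f`-completion of a bare tree:
`error(T°, f) = Σ_{leaves v} p_v · error(f_v, ±1)`. -/
noncomputable def errTree {n : ℕ} {L : Type} (p : Fin n → ℝ) (f : (Fin n → Bool) → Bool)
    (T : DTree n L) : ℝ :=
  ((T.leafAddrs).map (fun s => reachLeaf p T s * errOf p (subFun f T s))).sum

namespace ScoreAux

open Finset Function

variable {n : ℕ} {L : Type}

/-- number of nodes -/
def tsize : DTree n L → ℕ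
  | .leaf _ => 1
  | .node _ t0 t1 => tsize t0 + tsize t1 + 1

/-- restriction of a tree: fix coordinate `j` to value `b`. -/
def restrict : DTree n L → Fin n → Bool → DTree n L
  | .leaf l, _, _ => .leaf l
  | .node k t0 t1, j, b =>
      if k = j then (if b then restrict t1 j b else restrict t0 j b)
      else .node k (restrict t0 j b) (restrict t1 j b)

lemma tsize_pos (T : DTree n L) : 0 < tsize T := by
  cases T <;> simp [tsize]

lemma tsize_restrict_le (T : DTree n L) (j : Fin n) (b : Bool) :
    tsize (restrict T j b) ≤ tsize T := by
  induction T with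
  | leaf l => simp [restrict, tsize]
  | node k t0 t1 ih0 ih1 =>
      by_cases h : k = j
      · cases b <;> simp only [restrict, h, if_true, if_pos rfl] <;> simp [tsize] <;> omega
      · simp only [restrict, if_neg h, tsize]; omega

lemma depth_restrict_le (T : DTree n L) (j : Fin n) (b : Bool) :
    DTree.depth (restrict T j b) ≤ DTree.depth T := by
  induction T with
  | leaf l => simp [restrict]
  | node k t0 t1 ih0 ih1 =>
      by_cases h : k = j
      · cases b <;> simp only [restrict, h, if_true] <;> simp [DTree.depth] <;> omega
      · simp only [restrict, if_neg h, DTree.depth]; omega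

lemma eval_restrict (T : DTree n Bool) (j : Fin n) (b : Bool) (x : Fin n → Bool) :
    DTree.eval (restrict T j b) x = DTree.eval T (Function.update x j b) := by
  induction T generalizing x with
  | leaf l => simp [restrict, DTree.eval]
  | node k t0 t1 ih0 ih1 =>
      by_cases h : k = j
      · subst h
        have hxj : (Function.update x k b) k = b := by simp
        cases b <;> simp [restrict, DTree.eval, hxj, ih0, ih1]
      · have hxk : (Function.update x j b) k = x k := by
          rw [Function.update_of_ne h]
        simp only [restrict, if_neg h, DTree.eval, hxk]
        cases hx : x k <;> simp [hx, ih0, ih1]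

lemma eval_restrict_update (T : DTree n Bool) (j : Fin n) (b c : Bool) (x : Fin n → Bool) :
    DTree.eval (restrict T j b) (Function.update x j c) = DTree.eval (restrict T j b) x := by
  rw [eval_restrict, eval_restrict, Function.update_idem]

lemma follow_length_restrict_le (T : DTree n L) (j : Fin n) (b : Bool) (x : Fin n → Bool) :
    (DTree.follow (restrict T j b) x).length ≤ (DTree.follow T (Function.update x j b)).length := by
  induction T generalizing x with
  | leaf l => simp [restrict, DTree.follow]
  | node k t0 t1 ih0 ih1 =>
      by_cases h : k = j
      · subst h
        have hxj : (Function.update x k b) k = b := by simp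
        cases b
        · simp only [restrict, if_pos rfl, if_false, DTree.follow, hxj, Bool.false_eq_true,
            List.length_cons]
          exact le_trans (ih0 x) (by omega)
        · simp only [restrict, if_pos rfl, if_true, DTree.follow, hxj, List.length_cons]
          exact le_trans (ih1 x) (by omega)
      · have hxk : (Function.update x j b) k = x k := by rw [Function.update_of_ne h]
        simp only [restrict, if_neg h, DTree.follow, hxk, List.length_cons]
        cases hx : x k <;> simp [hx] <;> [exact ih0 x; exact ih1 x]

end ScoreAux
namespace ScoreAux

open Finset Function

variable {n : ℕ}

lemma prMass_nonneg {p : Fin n → ℝ} (hp : ∀ i, 0 ≤ p i ∧ p i ≤ 1) (x : Fin n → Bool) :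
    0 ≤ prMass p x := by
  apply Finset.prod_nonneg
  intro i _
  cases hx : x i <;> simp [hx]
  · linarith [(hp i).2]
  · exact (hp i).1

lemma prMass_sum_one {p : Fin n → ℝ} :
    ∑ x : Fin n → Bool, prMass p x = 1 := by
  classical
  have h := Finset.prod_univ_sum (fun _ : Fin n => (Finset.univ : Finset Bool))
    (fun i b => if b then p i else 1 - p i)
  simp only [Fintype.piFinset_univ] at h
  rw [show (1:ℝ) = ∏ i : Fin n, ∑ b : Bool, (if b then p i else 1 - p i) by
    simp [Fintype.sum_bool]]
  rw [h]
  rfl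

/-- the mass with coordinate `j` removed -/
noncomputable def prMassE (p : Fin n → ℝ) (j : Fin n) (x : Fin n → Bool) : ℝ :=
  ∏ i ∈ Finset.univ.erase j, if x i then p i else 1 - p i

lemma prMass_eq (p : Fin n → ℝ) (j : Fin n) (x : Fin n → Bool) :
    prMass p x = (if x j then p j else 1 - p j) * prMassE p j x := by
  rw [prMass, prMassE, ← Finset.mul_prod_erase _ _ (Finset.mem_univ j)]

lemma prMassE_update (p : Fin n → ℝ) (j : Fin n) (x : Fin n → Bool) (b : Bool) :
    prMassE p j (Function.update x j b) = prMassE p j x := by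
  apply Finset.prod_congr rfl
  intro i hi
  rw [Function.update_of_ne (Finset.ne_of_mem_erase hi)]

/-- Key splitting lemma for sums against the product measure. -/
lemma sum_update (p : Fin n → ℝ) (j : Fin n) (b : Bool) (G : (Fin n → Bool) → ℝ) :
    ∑ x : Fin n → Bool, prMass p x * G (Function.update x j b)
      = ∑ x ∈ Finset.univ.filter (fun x : Fin n → Bool => x j = b), prMassE p j x * G x := by
  classical
  rw [← Finset.sum_filter_add_sum_filter_not Finset.univ (fun x : Fin n → Bool => x j = b)]
  have h1 : ∑ x ∈ Finset.univ.filter (fun x : Fin n → Bool => x j = b),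
      prMass p x * G (Function.update x j b)
      = ∑ x ∈ Finset.univ.filter (fun x : Fin n → Bool => x j = b),
        (if b then p j else 1 - p j) * (prMassE p j x * G x) := by
    apply Finset.sum_congr rfl
    intro x hx
    have hxj : x j = b := (Finset.mem_filter.1 hx).2
    rw [prMass_eq p j, hxj, ← hxj, Function.update_eq_self]
    ring
  have h2 : ∑ x ∈ Finset.univ.filter (fun x : Fin n → Bool => ¬ x j = b),
      prMass p x * G (Function.update x j b)
      = ∑ x ∈ Finset.univ.filter (fun x : Fin n → Bool => x j = b),
        (if b then 1 - p j else p j) * (prMassE p j x * G x) := by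
    apply Finset.sum_nbij' (i := fun x => Function.update x j b)
      (j := fun x => Function.update x j (!b))
    · intro x hx
      simp only [Finset.mem_filter, Finset.mem_univ, true_and] at *
      simp
    · intro x hx
      simp only [Finset.mem_filter, Finset.mem_univ, true_and] at *
      simp only [Function.update_self]
      cases b <;> simp
    · intro x hx
      simp only [Finset.mem_filter, Finset.mem_univ, true_and] at hx
      have hxjb : x j = !b := by cases b <;> cases hxx : x j <;> simp_all
      funext i
      by_cases hij : i = j
      · subst hij; simp [hxjb]
      · simp [Function.update_of_ne hij]
    · intro x hx
      simp only [Finset.mem_filter, Finset.mem_univ, true_and] at hx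
      funext i
      by_cases hij : i = j
      · subst hij; simp [hx]
      · simp [Function.update_of_ne hij]
    · intro x hx
      simp only [Finset.mem_filter, Finset.mem_univ, true_and] at hx
      have hxjb : x j = !b := by cases b <;> cases hxx : x j <;> simp_all
      rw [prMass_eq p j, hxjb, prMassE_update]
      cases b <;> simp <;> ring
  rw [h1, h2, ← Finset.sum_add_distrib]
  apply Finset.sum_congr rfl
  intro x hx
  cases b <;> simp <;> ring

lemma split_sum (p : Fin n → ℝ) (j : Fin n) (F : (Fin n → Bool) → ℝ) :
    ∑ x : Fin n → Bool, prMass p x * F x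
      = p j * ∑ x : Fin n → Bool, prMass p x * F (Function.update x j true)
        + (1 - p j) * ∑ x : Fin n → Bool, prMass p x * F (Function.update x j false) := by
  classical
  rw [sum_update p j true F, sum_update p j false F, Finset.mul_sum, Finset.mul_sum]
  rw [← Finset.sum_filter_add_sum_filter_not Finset.univ (fun x : Fin n → Bool => x j = true)]
  congr 1
  · apply Finset.sum_congr rfl
    intro x hx
    have hxj : x j = true := (Finset.mem_filter.1 hx).2
    rw [prMass_eq p j, hxj]
    simp; ring
  · have : Finset.univ.filter (fun x : Fin n → Bool => ¬ x j = true)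
        = Finset.univ.filter (fun x : Fin n → Bool => x j = false) := by
      apply Finset.filter_congr
      intro x _
      simp
    rw [this]
    apply Finset.sum_congr rfl
    intro x hx
    have hxj : x j = false := (Finset.mem_filter.1 hx).2
    rw [prMass_eq p j, hxj]
    simp; ring

end ScoreAux
namespace ScoreAux

open Finset Function

variable {n : ℕ}

/-- disagreement probability (diagonal) -/
noncomputable def pd (p : Fin n → ℝ) (g h : (Fin n → Bool) → Bool) : ℝ :=
  ∑ z : Fin n → Bool, prMass p z * (if g z = h z then 0 else 1)

/-- disagreement probability for independent samples -/
noncomputable def pdd (p : Fin n → ℝ) (g h : (Fin n → Bool) → Bool) : ℝ :=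
  ∑ x : Fin n → Bool, prMass p x *
    (∑ y : Fin n → Bool, prMass p y * (if g x = h y then 0 else 1))

lemma pd_nonneg {p : Fin n → ℝ} (hp : ∀ i, 0 ≤ p i ∧ p i ≤ 1) (g h) :
    0 ≤ pd p g h := by
  apply Finset.sum_nonneg
  intro z _
  apply mul_nonneg (prMass_nonneg hp z)
  split <;> norm_num

lemma pd_self {p : Fin n → ℝ} (g) : pd p g g = 0 := by
  apply Finset.sum_eq_zero
  intro z _
  simp

/-- local disagreement along coordinate `i` -/
noncomputable def locD (p : Fin n → ℝ) (i : Fin n) (g : (Fin n → Bool) → Bool) : ℝ :=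
  ∑ x : Fin n → Bool, prMass p x *
    (if g (Function.update x i false) = g (Function.update x i true) then 0 else 1)

lemma infl_eq (p : Fin n → ℝ) (i : Fin n) (g) :
    infl p i g = ∑ x : Fin n → Bool, prMass p x *
      (p i * (if g x = g (Function.update x i true) then 0 else 1)
        + (1 - p i) * (if g x = g (Function.update x i false) then 0 else 1)) := by
  apply Finset.sum_congr rfl
  intro x _
  congr 1
  congr 1 <;> split_ifs <;> simp_all

lemma infl_eq_two (p : Fin n → ℝ) (i : Fin n) (g) :
    infl p i g = 2 * (p i * (1 - p i)) * locD p i g := by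
  rw [infl_eq, split_sum p i]
  have e1 : ∀ x : Fin n → Bool,
      (p i * (if g (Function.update x i true) = g (Function.update (Function.update x i true) i true) then (0:ℝ) else 1)
        + (1 - p i) * (if g (Function.update x i true) = g (Function.update (Function.update x i true) i false) then 0 else 1))
      = (1 - p i) * (if g (Function.update x i false) = g (Function.update x i true) then 0 else 1) := by
    intro x
    rw [Function.update_idem, Function.update_idem]
    by_cases h : g (Function.update x i false) = g (Function.update x i true)
    · rw [if_pos rfl, if_pos h.symm, if_pos h]; ring
    · rw [if_pos rfl, if_neg (fun hh => h hh.symm), if_neg h]; ring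
  have e0 : ∀ x : Fin n → Bool,
      (p i * (if g (Function.update x i false) = g (Function.update (Function.update x i false) i true) then (0:ℝ) else 1)
        + (1 - p i) * (if g (Function.update x i false) = g (Function.update (Function.update x i false) i false) then 0 else 1))
      = p i * (if g (Function.update x i false) = g (Function.update x i true) then 0 else 1) := by
    intro x
    rw [Function.update_idem, Function.update_idem]
    by_cases h : g (Function.update x i false) = g (Function.update x i true)
    · rw [if_pos rfl, if_pos h]; ring
    · rw [if_pos rfl, if_neg h]; ring
  have A := Finset.sum_congr rfl (fun x (_ : x ∈ (Finset.univ : Finset (Fin n → Bool))) =>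
    congrArg (fun t => prMass p x * t) (e1 x))
  have B := Finset.sum_congr rfl (fun x (_ : x ∈ (Finset.univ : Finset (Fin n → Bool))) =>
    congrArg (fun t => prMass p x * t) (e0 x))
  rw [A, B]
  have hA : ∑ x : Fin n → Bool, prMass p x *
      ((1 - p i) * (if g (Function.update x i false) = g (Function.update x i true) then 0 else 1))
      = (1 - p i) * locD p i g := by
    rw [locD, Finset.mul_sum]
    exact Finset.sum_congr rfl fun x _ => by ring
  have hB : ∑ x : Fin n → Bool, prMass p x *
      (p i * (if g (Function.update x i false) = g (Function.update x i true) then 0 else 1))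
      = p i * locD p i g := by
    rw [locD, Finset.mul_sum]
    exact Finset.sum_congr rfl fun x _ => by ring
  rw [hA, hB]
  ring

lemma locD_nonneg {p : Fin n → ℝ} (hp : ∀ i, 0 ≤ p i ∧ p i ≤ 1) (i : Fin n) (g) :
    0 ≤ locD p i g := by
  apply Finset.sum_nonneg
  intro x _
  apply mul_nonneg (prMass_nonneg hp x)
  split <;> norm_num

lemma infl_nonneg {p : Fin n → ℝ} (hp : ∀ i, 0 ≤ p i ∧ p i ≤ 1) (i : Fin n) (g) :
    0 ≤ infl p i g := by
  apply Finset.sum_nonneg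
  intro x _
  apply mul_nonneg (prMass_nonneg hp x)
  apply add_nonneg
  · split
    · exact (hp i).1
    · norm_num
  · split
    · linarith [(hp i).2]
    · norm_num

lemma infl_indep (p : Fin n → ℝ) (i : Fin n) (g)
    (h : ∀ x b, g (Function.update x i b) = g x) : infl p i g = 0 := by
  apply Finset.sum_eq_zero
  intro x _
  rw [h x true, h x false]
  simp

lemma infl_decomp (p : Fin n → ℝ) {i j : Fin n} (hij : i ≠ j) (g) :
    infl p i g = p j * infl p i (fun x => g (Function.update x j true))
      + (1 - p j) * infl p i (fun x => g (Function.update x j false)) := by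
  rw [infl_eq, split_sum p j]
  congr 1
  · congr 1
    rw [infl_eq]
    apply Finset.sum_congr rfl
    intro x _
    congr 3 <;> rw [Function.update_comm hij]
  · congr 1
    rw [infl_eq]
    apply Finset.sum_congr rfl
    intro x _
    congr 3 <;> rw [Function.update_comm hij]

lemma totalInf_nonneg {p : Fin n → ℝ} (hp : ∀ i, 0 ≤ p i ∧ p i ≤ 1) (g) :
    0 ≤ totalInf p g :=
  Finset.sum_nonneg fun i _ => infl_nonneg hp i g

lemma totalInf_decomp (p : Fin n → ℝ) (j : Fin n) (g) :
    totalInf p g = infl p j g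
      + (p j * totalInf p (fun x => g (Function.update x j true))
        + (1 - p j) * totalInf p (fun x => g (Function.update x j false))) := by
  have h1 : infl p j (fun x => g (Function.update x j true)) = 0 := by
    apply infl_indep
    intro x b
    simp only [Function.update_idem]
  have h0 : infl p j (fun x => g (Function.update x j false)) = 0 := by
    apply infl_indep
    intro x b
    simp only [Function.update_idem]
  unfold totalInf
  rw [← Finset.add_sum_erase _ _ (Finset.mem_univ j),
      ← Finset.add_sum_erase _ (fun i => infl p i (fun x => g (Function.update x j true)))
        (Finset.mem_univ j),
      ← Finset.add_sum_erase _ (fun i => infl p i (fun x => g (Function.update x j false)))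
        (Finset.mem_univ j)]
  rw [h1, h0]
  have : ∑ i ∈ Finset.univ.erase j, infl p i g
      = p j * ∑ i ∈ Finset.univ.erase j, infl p i (fun x => g (Function.update x j true))
        + (1 - p j) * ∑ i ∈ Finset.univ.erase j, infl p i (fun x => g (Function.update x j false)) := by
    rw [Finset.mul_sum, Finset.mul_sum, ← Finset.sum_add_distrib]
    apply Finset.sum_congr rfl
    intro i hi
    exact infl_decomp p (Finset.ne_of_mem_erase hi) g
  rw [this]
  ring

lemma expVal_decomp (p : Fin n → ℝ) (j : Fin n) (g) :
    expVal p g = p j * expVal p (fun x => g (Function.update x j true))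
      + (1 - p j) * expVal p (fun x => g (Function.update x j false)) := by
  unfold expVal
  exact split_sum p j _

lemma expVal_le_one {p : Fin n → ℝ} (hp : ∀ i, 0 ≤ p i ∧ p i ≤ 1) (g) :
    expVal p g ≤ 1 := by
  rw [← prMass_sum_one (p := p)]
  apply Finset.sum_le_sum
  intro x _
  have := prMass_nonneg hp x
  have h : (if g x then (1:ℝ) else -1) ≤ 1 := by split <;> norm_num
  nlinarith

lemma neg_one_le_expVal {p : Fin n → ℝ} (hp : ∀ i, 0 ≤ p i ∧ p i ≤ 1) (g) :
    -1 ≤ expVal p g := by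
  have h : -(1:ℝ) = -(∑ x : Fin n → Bool, prMass p x) := by rw [prMass_sum_one]
  rw [h, ← Finset.sum_neg_distrib]
  apply Finset.sum_le_sum
  intro x _
  have := prMass_nonneg hp x
  have h2 : (-1:ℝ) ≤ (if g x then (1:ℝ) else -1) := by split <;> norm_num
  nlinarith

lemma varOf_nonneg {p : Fin n → ℝ} (hp : ∀ i, 0 ≤ p i ∧ p i ≤ 1) (g) :
    0 ≤ varOf p g := by
  have h1 := expVal_le_one hp g
  have h2 := neg_one_le_expVal hp g
  unfold varOf
  nlinarith

lemma varOf_eq_two_pdd {p : Fin n → ℝ} (g) :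
    varOf p g = 2 * pdd p g g := by
  classical
  set S1 : ℝ := ∑ x : Fin n → Bool, prMass p x * (if g x then 1 else 0) with hS1
  set S0 : ℝ := ∑ x : Fin n → Bool, prMass p x * (if g x then 0 else 1) with hS0
  have hsum : S1 + S0 = 1 := by
    rw [hS1, hS0, ← Finset.sum_add_distrib]
    have e : ∀ x : Fin n → Bool, prMass p x * (if g x then (1:ℝ) else 0)
        + prMass p x * (if g x then (0:ℝ) else 1) = prMass p x := by
      intro x; split <;> ring
    rw [Finset.sum_congr rfl fun x _ => e x, prMass_sum_one]
  have hexp : expVal p g = S1 - S0 := by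
    rw [expVal, hS1, hS0, ← Finset.sum_sub_distrib]
    apply Finset.sum_congr rfl
    intro x _
    split <;> ring
  have hpdd : pdd p g g = S1 * S0 + S0 * S1 := by
    unfold pdd
    have inner : ∀ x : Fin n → Bool,
        (∑ y : Fin n → Bool, prMass p y * (if g x = g y then 0 else 1))
          = if g x then S0 else S1 := by
      intro x
      cases hgx : g x
      · rw [if_neg (by simp), hS1]
        apply Finset.sum_congr rfl
        intro y _
        cases hgy : g y <;> simp [hgy]
      · rw [if_pos rfl, hS0]
        apply Finset.sum_congr rfl
        intro y _
        cases hgy : g y <;> simp [hgy]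
    rw [Finset.sum_congr rfl (fun x (_ : x ∈ (Finset.univ : Finset (Fin n → Bool))) =>
      congrArg (fun t => prMass p x * t) (inner x))]
    have e : ∀ x : Fin n → Bool, prMass p x * (if g x then S0 else S1)
        = S0 * (prMass p x * (if g x then 1 else 0)) + S1 * (prMass p x * (if g x then 0 else 1)) := by
      intro x
      cases hgx : g x <;> simp [hgx] <;> ring
    rw [Finset.sum_congr rfl (fun x _ => e x), Finset.sum_add_distrib,
        ← Finset.mul_sum, ← Finset.mul_sum, ← hS1, ← hS0]
    ring
  unfold varOf
  rw [hexp, hpdd]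
  nlinarith [hsum]

lemma bddAbove_infl (p : Fin n → ℝ) (g) : BddAbove (Set.range fun i => infl p i g) :=
  (Set.finite_range _).bddAbove

lemma infl_le_maxInf (p : Fin n → ℝ) (i : Fin n) (g) : infl p i g ≤ maxInf p g :=
  le_ciSup (bddAbove_infl p g) i

lemma maxInf_nonneg {p : Fin n → ℝ} (hp : ∀ i, 0 ≤ p i ∧ p i ≤ 1) (g) :
    0 ≤ maxInf p g := by
  rcases isEmpty_or_nonempty (Fin n) with h | h
  · unfold maxInf
    rw [Real.iSup_of_isEmpty]
  · exact le_trans (infl_nonneg hp (Classical.arbitrary (Fin n)) g)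
      (infl_le_maxInf p _ g)

end ScoreAux
namespace ScoreAux

open Finset Function

variable {n : ℕ}

noncomputable def avgE (p : Fin n → ℝ) {L : Type} (T : DTree n L) : ℝ :=
  ∑ x : Fin n → Bool, prMass p x * ((T.follow x).length : ℝ)

lemma avgE_nonneg {p : Fin n → ℝ} (hp : ∀ i, 0 ≤ p i ∧ p i ≤ 1) {L : Type} (T : DTree n L) :
    0 ≤ avgE p T :=
  Finset.sum_nonneg fun x _ => mul_nonneg (prMass_nonneg hp x) (by positivity)

lemma avgE_leaf {p : Fin n → ℝ} {L : Type} (l : L) : avgE p (DTree.leaf l : DTree n L) = 0 := by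
  apply Finset.sum_eq_zero
  intro x _
  simp [DTree.follow]

lemma avgE_node_ge {p : Fin n → ℝ} (hp : ∀ i, 0 ≤ p i ∧ p i ≤ 1) {L : Type}
    (j : Fin n) (t0 t1 : DTree n L) :
    1 + (p j * avgE p (restrict t1 j true) + (1 - p j) * avgE p (restrict t0 j false))
      ≤ avgE p (DTree.node j t0 t1) := by
  have hstep : avgE p (DTree.node j t0 t1)
      = 1 + ∑ x : Fin n → Bool, prMass p x *
          (if x j then ((t1.follow x).length : ℝ) else ((t0.follow x).length : ℝ)) := by
    unfold avgE
    have e : ∀ x : Fin n → Bool, prMass p x * (((DTree.node j t0 t1).follow x).length : ℝ)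
        = prMass p x + prMass p x *
          (if x j then ((t1.follow x).length : ℝ) else ((t0.follow x).length : ℝ)) := by
      intro x
      simp only [DTree.follow]
      cases hx : x j <;> simp [hx] <;> push_cast <;> ring
    rw [Finset.sum_congr rfl fun x _ => e x, Finset.sum_add_distrib, prMass_sum_one]
  rw [hstep, split_sum p j (fun x =>
    (if x j then ((t1.follow x).length : ℝ) else ((t0.follow x).length : ℝ)))]
  have hj0 := (hp j).1
  have hj1 := (hp j).2
  have h1 : avgE p (restrict t1 j true)
      ≤ ∑ x : Fin n → Bool, prMass p x *
        (if (Function.update x j true) j then (((t1.follow (Function.update x j true)).length : ℝ))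
          else ((t0.follow (Function.update x j true)).length : ℝ)) := by
    unfold avgE
    apply Finset.sum_le_sum
    intro x _
    simp only [Function.update_self, if_true]
    apply mul_le_mul_of_nonneg_left _ (prMass_nonneg hp x)
    exact_mod_cast follow_length_restrict_le t1 j true x
  have h0 : avgE p (restrict t0 j false)
      ≤ ∑ x : Fin n → Bool, prMass p x *
        (if (Function.update x j false) j then (((t1.follow (Function.update x j false)).length : ℝ))
          else ((t0.follow (Function.update x j false)).length : ℝ)) := by
    unfold avgE
    apply Finset.sum_le_sum
    intro x _
    simp only [Function.update_self, Bool.false_eq_true, if_false]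
    apply mul_le_mul_of_nonneg_left _ (prMass_nonneg hp x)
    exact_mod_cast follow_length_restrict_le t0 j false x
  have := mul_le_mul_of_nonneg_left h1 hj0
  have := mul_le_mul_of_nonneg_left h0 (by linarith : (0:ℝ) ≤ 1 - p j)
  linarith

/-- triangle comparison at a node for diagonal disagreement sums -/
lemma pd_node {p : Fin n → ℝ} (hp : ∀ i, 0 ≤ p i ∧ p i ≤ 1) (j : Fin n)
    (g h0 h1 : (Fin n → Bool) → Bool)
    (hind0 : ∀ x c, h0 (Function.update x j c) = h0 x)
    (hind1 : ∀ x c, h1 (Function.update x j c) = h1 x) :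
    p j * pd p g h1 + (1 - p j) * pd p g h0
      ≤ pd p g (fun z => if z j then h1 z else h0 z) + infl p j g := by
  classical
  set A11 : ℝ := ∑ z : Fin n → Bool, prMass p z *
    (if g (Function.update z j true) = h1 z then 0 else 1) with hA11
  set A01 : ℝ := ∑ z : Fin n → Bool, prMass p z *
    (if g (Function.update z j false) = h1 z then 0 else 1) with hA01
  set A10 : ℝ := ∑ z : Fin n → Bool, prMass p z *
    (if g (Function.update z j true) = h0 z then 0 else 1) with hA10
  set A00 : ℝ := ∑ z : Fin n → Bool, prMass p z *
    (if g (Function.update z j false) = h0 z then 0 else 1) with hA00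
  have hpd1 : pd p g h1 = p j * A11 + (1 - p j) * A01 := by
    unfold pd
    rw [split_sum p j (fun z => if g z = h1 z then (0:ℝ) else 1), hA11, hA01]
    congr 1
    · congr 1
      apply Finset.sum_congr rfl
      intro z _
      rw [hind1 z true]
    · congr 1
      apply Finset.sum_congr rfl
      intro z _
      rw [hind1 z false]
  have hpd0 : pd p g h0 = p j * A10 + (1 - p j) * A00 := by
    unfold pd
    rw [split_sum p j (fun z => if g z = h0 z then (0:ℝ) else 1), hA10, hA00]
    congr 1
    · congr 1
      apply Finset.sum_congr rfl
      intro z _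
      rw [hind0 z true]
    · congr 1
      apply Finset.sum_congr rfl
      intro z _
      rw [hind0 z false]
  have hpdh : pd p g (fun z => if z j then h1 z else h0 z) = p j * A11 + (1 - p j) * A00 := by
    unfold pd
    rw [split_sum p j (fun z => if g z = (if z j then h1 z else h0 z) then (0:ℝ) else 1),
      hA11, hA00]
    congr 1
    · congr 1
      apply Finset.sum_congr rfl
      intro z _
      simp only [Function.update_self, if_true, hind1 z true]
    · congr 1
      apply Finset.sum_congr rfl
      intro z _
      simp only [Function.update_self, Bool.false_eq_true, if_false, hind0 z false]
  have hkey : A01 + A10 ≤ A11 + A00 + 2 * locD p j g := by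
    have e : ∀ z : Fin n → Bool,
        ((if g (Function.update z j false) = h1 z then (0:ℝ) else 1)
          + (if g (Function.update z j true) = h0 z then 0 else 1))
        ≤ ((if g (Function.update z j true) = h1 z then (0:ℝ) else 1)
          + (if g (Function.update z j false) = h0 z then 0 else 1))
          + 2 * (if g (Function.update z j false) = g (Function.update z j true) then 0 else 1) := by
      intro z
      by_cases hgg : g (Function.update z j false) = g (Function.update z j true)
      · rw [if_pos hgg, hgg]
        split_ifs <;> norm_num
      · rw [if_neg hgg]
        split_ifs <;> norm_num
    have := Finset.sum_le_sum (fun z (_ : z ∈ (Finset.univ : Finset (Fin n → Bool))) =>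
      mul_le_mul_of_nonneg_left (e z) (prMass_nonneg hp z))
    simp only [mul_add] at this
    simp only [Finset.sum_add_distrib] at this
    rw [hA01, hA10, hA11, hA00, locD]
    have h2 : ∑ z : Fin n → Bool, prMass p z *
        (2 * (if g (Function.update z j false) = g (Function.update z j true) then (0:ℝ) else 1))
        = 2 * ∑ z : Fin n → Bool, prMass p z *
          (if g (Function.update z j false) = g (Function.update z j true) then (0:ℝ) else 1) := by
      rw [Finset.mul_sum]
      exact Finset.sum_congr rfl fun z _ => by ring
    rw [h2] at this
    linarith
  have hπ : 0 ≤ p j * (1 - p j) := mul_nonneg (hp j).1 (by linarith [(hp j).2])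
  rw [hpd1, hpd0, hpdh, infl_eq_two]
  nlinarith [hkey, hπ]

/-- OSSS-type inequality. -/
lemma osss {p : Fin n → ℝ} (hp : ∀ i, 0 ≤ p i ∧ p i ≤ 1) :
    ∀ (N : ℕ) (T : DTree n Bool) (g : (Fin n → Bool) → Bool) (M : ℝ),
      tsize T ≤ N → (∀ i, infl p i g ≤ M) →
      pdd p g (fun y => T.eval y) ≤ pd p g (fun z => T.eval z) + M * avgE p T := by
  intro N
  induction N with
  | zero => intro T g M hT _; exact absurd hT (by have := tsize_pos T; omega)
  | succ N ih =>
      intro T g M hT hM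
      cases T with
      | leaf c =>
          have hpdd : pdd p g (fun y => (DTree.leaf c : DTree n Bool).eval y)
              = pd p g (fun z => (DTree.leaf c : DTree n Bool).eval z) := by
            unfold pdd pd
            simp only [DTree.eval]
            apply Finset.sum_congr rfl
            intro x _
            congr 1
            have e2 : (∑ y : Fin n → Bool, prMass p y * (if g x = c then (0:ℝ) else 1))
                = (if g x = c then (0:ℝ) else 1) * ∑ y : Fin n → Bool, prMass p y := by
              rw [Finset.mul_sum]
              exact Finset.sum_congr rfl fun y _ => by ring
            refine e2.trans ?_
            rw [prMass_sum_one, mul_one]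
            rfl
          rw [hpdd, avgE_leaf, mul_zero, add_zero]
      | node j t0 t1 =>
          set E1 := fun x => (restrict t1 j true).eval x with hE1
          set E0 := fun x => (restrict t0 j false).eval x with hE0
          have heval : ∀ z, (DTree.node j t0 t1).eval z = if z j then E1 z else E0 z := by
            intro z
            rw [hE1, hE0]
            simp only [DTree.eval, eval_restrict]
            cases hz : z j
            · simp only [Bool.false_eq_true, if_false]
              congr 1
              conv_lhs => rw [← Function.update_eq_self z (a := j)]
              rw [hz]
            · simp only [if_true]
              congr 1
              conv_lhs => rw [← Function.update_eq_self z (a := j)]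
              rw [hz]
          have hind1 : ∀ x c, E1 (Function.update x j c) = E1 x := fun x c =>
            eval_restrict_update t1 j true c x
          have hind0 : ∀ x c, E0 (Function.update x j c) = E0 x := fun x c =>
            eval_restrict_update t0 j false c x
          have hM0 : 0 ≤ M := le_trans (infl_nonneg hp j g) (hM j)
          have hsz1 : tsize (restrict t1 j true) ≤ N := by
            have := tsize_restrict_le t1 j true
            simp only [tsize] at hT
            omega
          have hsz0 : tsize (restrict t0 j false) ≤ N := by
            have := tsize_restrict_le t0 j false
            simp only [tsize] at hT
            omega
          have ih1 := ih (restrict t1 j true) g M hsz1 hM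
          have ih0 := ih (restrict t0 j false) g M hsz0 hM
          -- step 1: pdd decomposition
          have hsplit : pdd p g (fun y => (DTree.node j t0 t1).eval y)
              = p j * pdd p g E1 + (1 - p j) * pdd p g E0 := by
            unfold pdd
            have inner : ∀ x : Fin n → Bool,
                (∑ y : Fin n → Bool, prMass p y *
                  (if g x = (DTree.node j t0 t1).eval y then 0 else 1))
                = p j * (∑ y : Fin n → Bool, prMass p y * (if g x = E1 y then 0 else 1))
                  + (1 - p j) * (∑ y : Fin n → Bool, prMass p y * (if g x = E0 y then 0 else 1)) := by
              intro x
              rw [split_sum p j (fun y => if g x = (DTree.node j t0 t1).eval y then (0:ℝ) else 1)]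
              congr 1
              · congr 1
                apply Finset.sum_congr rfl
                intro y _
                rw [heval, Function.update_self, if_pos rfl, hind1]
              · congr 1
                apply Finset.sum_congr rfl
                intro y _
                rw [heval, Function.update_self]
                simp only [Bool.false_eq_true, if_false]
                rw [hind0]
            rw [Finset.sum_congr rfl (fun x (_ : x ∈ (Finset.univ : Finset (Fin n → Bool))) =>
              congrArg (fun t => prMass p x * t) (inner x))]
            rw [Finset.mul_sum, Finset.mul_sum, ← Finset.sum_add_distrib]
            apply Finset.sum_congr rfl
            intro x _
            ring
          have hpdh : pd p g (fun z => if z j then E1 z else E0 z)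
              = pd p g (fun z => (DTree.node j t0 t1).eval z) := by
            unfold pd
            apply Finset.sum_congr rfl
            intro z _
            simp only [heval]
          have htri := pd_node hp j g E0 E1 hind0 hind1
          rw [hpdh] at htri
          have hinfl : infl p j g ≤ M := hM j
          have havg := avgE_node_ge hp j t0 t1
          have hπ0 : 0 ≤ p j := (hp j).1
          have hπ1 : 0 ≤ 1 - p j := by linarith [(hp j).2]
          calc pdd p g (fun y => (DTree.node j t0 t1).eval y)
              = p j * pdd p g E1 + (1 - p j) * pdd p g E0 := hsplit
            _ ≤ p j * (pd p g E1 + M * avgE p (restrict t1 j true))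
                + (1 - p j) * (pd p g E0 + M * avgE p (restrict t0 j false)) := by
                have := mul_le_mul_of_nonneg_left ih1 hπ0
                have := mul_le_mul_of_nonneg_left ih0 hπ1
                linarith
            _ = (p j * pd p g E1 + (1 - p j) * pd p g E0)
                + M * (p j * avgE p (restrict t1 j true) + (1 - p j) * avgE p (restrict t0 j false)) := by
                ring
            _ ≤ (pd p g (fun z => (DTree.node j t0 t1).eval z) + infl p j g)
                + M * (p j * avgE p (restrict t1 j true) + (1 - p j) * avgE p (restrict t0 j false)) := by
                linarith
            _ ≤ pd p g (fun z => (DTree.node j t0 t1).eval z) + M * avgE p (DTree.node j t0 t1) := by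
                have h2 : M * (1 + (p j * avgE p (restrict t1 j true)
                    + (1 - p j) * avgE p (restrict t0 j false))) ≤ M * avgE p (DTree.node j t0 t1) :=
                  mul_le_mul_of_nonneg_left havg hM0
                nlinarith
  
end ScoreAux
namespace ScoreAux

open Finset Function

variable {n : ℕ}

theorem coreAux (q a0 a1 dP : ℝ) (h1 : 0 ≤ q) (h2 : q ≤ 1)
    (ha0 : 0 ≤ a0) (ha0' : a0 ≤ 2) (ha1 : 0 ≤ a1) (ha1' : a1 ≤ 2)
    (h4 : 2*dP ≤ a0+a1) (h5 : a0+a1 ≤ 2) :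
    4*q*(1-q)*dP ≤ (q*a1+(1-q)*a0) * (2 - (q*a1+(1-q)*a0)) := by
  have hq' : 0 ≤ 1 - q := by linarith
  have h2a0 : 0 ≤ 2 - a0 := by linarith
  have h2a1 : 0 ≤ 2 - a1 := by linarith
  set P := q^2*(a1*(2-a1)) with hP
  set Q := (1-q)^2*(a0*(2-a0)) with hQ
  set R := q*(1-q)*(a0*a1) with hR
  have hPn : 0 ≤ P := mul_nonneg (sq_nonneg q) (mul_nonneg ha1 h2a1)
  have hQn : 0 ≤ Q := mul_nonneg (sq_nonneg (1-q)) (mul_nonneg ha0 h2a0)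
  have hRn : 0 ≤ R := mul_nonneg (mul_nonneg h1 hq') (mul_nonneg ha0 ha1)
  have hprod : a0*a1 ≤ (2-a0)*(2-a1) := by nlinarith
  have hPQ : R^2 ≤ P*Q := by
    have h6 : (a0*a1)*(a0*a1) ≤ ((2-a0)*(2-a1))*(a0*a1) :=
      mul_le_mul_of_nonneg_right hprod (mul_nonneg ha0 ha1)
    nlinarith [sq_nonneg (q*(1-q)), mul_nonneg (mul_nonneg h1 hq') (mul_nonneg ha0 ha1)]
  have hPQR : 2*R ≤ P + Q := by nlinarith [sq_nonneg (P - Q), sq_nonneg (P + Q - 2*R)]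
  have hscale : 2*(q*(1 - q))*(2*dP) ≤ 2*(q*(1-q))*(a0+a1) :=
    mul_le_mul_of_nonneg_left h4 (by nlinarith)
  nlinarith []

theorem core0 (q e0 e1 d : ℝ) (h1 : 0 ≤ q) (h2 : q ≤ 1) (hd : 0 ≤ d)
    (hc1 : 2*d ≤ 2 - (e0+e1)) (hc2 : 2*d ≤ 2 + (e0+e1))
    (he0 : -1 ≤ e0) (he0' : e0 ≤ 1) (he1 : -1 ≤ e1) (he1' : e1 ≤ 1) :
    4*q*(1-q)*d ≤ 1 - (q*e1+(1-q)*e0)^2 := by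
  rcases le_total (e0+e1) 0 with h | h
  · have hca := coreAux q (1+e0) (1+e1) d h1 h2 (by linarith) (by linarith) (by linarith)
      (by linarith) (by linarith) (by linarith)
    have hexp : (q*(1+e1)+(1-q)*(1+e0)) * (2 - (q*(1+e1)+(1-q)*(1+e0)))
        = 1 - (q*e1+(1-q)*e0)^2 - (1 - q - q)* 0 := by ring_nf
    nlinarith [hca]
  · have hca := coreAux q (1-e0) (1-e1) d h1 h2 (by linarith) (by linarith) (by linarith)
      (by linarith) (by linarith) (by linarith)
    nlinarith [hca]

lemma pd_sum_bound_add {p : Fin n → ℝ} (hp : ∀ i, 0 ≤ p i ∧ p i ≤ 1) (g h) :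
    2 * pd p g h + (expVal p g + expVal p h) ≤ 2 := by
  have key : ∀ z : Fin n → Bool,
      2 * (if g z = h z then (0:ℝ) else 1) + ((if g z then (1:ℝ) else -1) + (if h z then (1:ℝ) else -1)) ≤ 2 := by
    intro z
    cases hg : g z <;> cases hh : h z <;> simp [hg, hh] <;> norm_num
  have hsum : ∑ z : Fin n → Bool, prMass p z *
      (2 * (if g z = h z then (0:ℝ) else 1) + ((if g z then (1:ℝ) else -1) + (if h z then (1:ℝ) else -1)))
      ≤ ∑ z : Fin n → Bool, prMass p z * 2 :=
    Finset.sum_le_sum fun z _ => mul_le_mul_of_nonneg_left (key z) (prMass_nonneg hp z)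
  have hL : ∑ z : Fin n → Bool, prMass p z *
      (2 * (if g z = h z then (0:ℝ) else 1) + ((if g z then (1:ℝ) else -1) + (if h z then (1:ℝ) else -1)))
      = 2 * pd p g h + (expVal p g + expVal p h) := by
    unfold pd expVal
    rw [Finset.mul_sum, ← Finset.sum_add_distrib, ← Finset.sum_add_distrib]
    exact Finset.sum_congr rfl fun z _ => by ring
  have hR : ∑ z : Fin n → Bool, prMass p z * 2 = 2 := by
    rw [← Finset.sum_mul, prMass_sum_one, one_mul]
  rw [hL, hR] at hsum
  exact hsum

lemma pd_sum_bound_sub {p : Fin n → ℝ} (hp : ∀ i, 0 ≤ p i ∧ p i ≤ 1) (g h) :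
    2 * pd p g h - (expVal p g + expVal p h) ≤ 2 := by
  have key : ∀ z : Fin n → Bool,
      2 * (if g z = h z then (0:ℝ) else 1) - ((if g z then (1:ℝ) else -1) + (if h z then (1:ℝ) else -1)) ≤ 2 := by
    intro z
    cases hg : g z <;> cases hh : h z <;> simp [hg, hh] <;> norm_num
  have hsum : ∑ z : Fin n → Bool, prMass p z *
      (2 * (if g z = h z then (0:ℝ) else 1) - ((if g z then (1:ℝ) else -1) + (if h z then (1:ℝ) else -1)))
      ≤ ∑ z : Fin n → Bool, prMass p z * 2 :=
    Finset.sum_le_sum fun z _ => mul_le_mul_of_nonneg_left (key z) (prMass_nonneg hp z)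
  have hL : ∑ z : Fin n → Bool, prMass p z *
      (2 * (if g z = h z then (0:ℝ) else 1) - ((if g z then (1:ℝ) else -1) + (if h z then (1:ℝ) else -1)))
      = 2 * pd p g h - (expVal p g + expVal p h) := by
    unfold pd expVal
    rw [Finset.mul_sum, ← Finset.sum_add_distrib, ← Finset.sum_sub_distrib]
    exact Finset.sum_congr rfl fun z _ => by ring
  have hR : ∑ z : Fin n → Bool, prMass p z * 2 = 2 := by
    rw [← Finset.sum_mul, prMass_sum_one, one_mul]
  rw [hL, hR] at hsum
  exact hsum

/-- reverse Poincaré: total influence at most (depth/2)·variance. -/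
lemma revPoincare {p : Fin n → ℝ} (hp : ∀ i, 0 ≤ p i ∧ p i ≤ 1) :
    ∀ (N : ℕ) (T : DTree n Bool), tsize T ≤ N →
      2 * totalInf p (fun x => T.eval x) ≤ (T.depth : ℝ) * varOf p (fun x => T.eval x) := by
  intro N
  induction N with
  | zero => intro T hT; exact absurd hT (by have := tsize_pos T; omega)
  | succ N ih =>
      intro T hT
      cases T with
      | leaf c =>
          have h0 : totalInf p (fun x => (DTree.leaf c : DTree n Bool).eval x) = 0 := by
            apply Finset.sum_eq_zero
            intro i _
            apply infl_indep
            intro x b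
            simp [DTree.eval]
          rw [h0]
          simp [DTree.depth]
      | node j t0 t1 =>
          set F := fun x => (DTree.node j t0 t1).eval x with hF
          set E1 := fun x => (restrict t1 j true).eval x with hE1
          set E0 := fun x => (restrict t0 j false).eval x with hE0
          have hF1 : (fun x => F (Function.update x j true)) = E1 := by
            funext x
            rw [hF, hE1]
            simp only [DTree.eval, Function.update_self, if_true, eval_restrict]
          have hF0 : (fun x => F (Function.update x j false)) = E0 := by
            funext x
            rw [hF, hE0]
            simp only [DTree.eval, Function.update_self, Bool.false_eq_true, if_false,
              eval_restrict]
          have hsz1 : tsize (restrict t1 j true) ≤ N := by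
            have := tsize_restrict_le t1 j true
            simp only [tsize] at hT
            omega
          have hsz0 : tsize (restrict t0 j false) ≤ N := by
            have := tsize_restrict_le t0 j false
            simp only [tsize] at hT
            omega
          have ih1 := ih (restrict t1 j true) hsz1
          have ih0 := ih (restrict t0 j false) hsz0
          rw [← hE1] at ih1
          rw [← hE0] at ih0
          -- decompositions
          have hti : totalInf p F = infl p j F + (p j * totalInf p E1 + (1 - p j) * totalInf p E0) := by
            rw [totalInf_decomp p j F, hF1, hF0]
          have hlocD : locD p j F = pd p E0 E1 := by
            unfold locD pd
            apply Finset.sum_congr rfl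
            intro x _
            have h1 : F (Function.update x j true) = E1 x := by rw [← hF1]
            have h0 : F (Function.update x j false) = E0 x := by rw [← hF0]
            rw [h1, h0]
          have hinflj : infl p j F = 2 * (p j * (1 - p j)) * pd p E0 E1 := by
            rw [infl_eq_two, hlocD]
          have hexp : expVal p F = p j * expVal p E1 + (1 - p j) * expVal p E0 := by
            rw [expVal_decomp p j F, hF1, hF0]
          -- abbreviations
          set d : ℝ := pd p E0 E1 with hd
          set e1 : ℝ := expVal p E1 with he1
          set e0 : ℝ := expVal p E0 with he0
          have hdn : 0 ≤ d := pd_nonneg hp E0 E1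
          have hb1 := pd_sum_bound_add hp E0 E1
          have hb2 := pd_sum_bound_sub hp E0 E1
          have he1a := expVal_le_one hp E1
          have he1b := neg_one_le_expVal hp E1
          have he0a := expVal_le_one hp E0
          have he0b := neg_one_le_expVal hp E0
          have hπ0 := (hp j).1
          have hπ1 := (hp j).2
          have hcore := core0 (p j) e0 e1 d hπ0 hπ1 hdn (by linarith) (by linarith)
            he0b he0a he1b he1a
          -- depth facts
          have hdep : ((DTree.node j t0 t1).depth : ℝ)
              = (max t0.depth t1.depth : ℕ) + 1 := by
            simp [DTree.depth]
          have hdep1 : (DTree.depth (restrict t1 j true) : ℝ)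
              ≤ ((DTree.node j t0 t1).depth : ℝ) - 1 := by
            rw [hdep]
            have h1 : DTree.depth (restrict t1 j true) ≤ max t0.depth t1.depth :=
              le_trans (depth_restrict_le t1 j true) (le_max_right _ _)
            have := Nat.cast_le (α := ℝ) |>.2 h1
            linarith
          have hdep0 : (DTree.depth (restrict t0 j false) : ℝ)
              ≤ ((DTree.node j t0 t1).depth : ℝ) - 1 := by
            rw [hdep]
            have h1 : DTree.depth (restrict t0 j false) ≤ max t0.depth t1.depth :=
              le_trans (depth_restrict_le t0 j false) (le_max_left _ _)
            have := Nat.cast_le (α := ℝ) |>.2 h1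
            linarith
          have hdepD : (1:ℝ) ≤ ((DTree.node j t0 t1).depth : ℝ) := by
            rw [hdep]
            have : (0:ℝ) ≤ ((max t0.depth t1.depth : ℕ) : ℝ) := Nat.cast_nonneg _
            linarith
          set D : ℝ := ((DTree.node j t0 t1).depth : ℝ) with hD
          have hV1 : 0 ≤ varOf p E1 := varOf_nonneg hp E1
          have hV0 : 0 ≤ varOf p E0 := varOf_nonneg hp E0
          have hIH1 : 2 * totalInf p E1 ≤ (D - 1) * varOf p E1 :=
            le_trans ih1 (mul_le_mul_of_nonneg_right hdep1 hV1)
          have hIH0 : 2 * totalInf p E0 ≤ (D - 1) * varOf p E0 :=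
            le_trans ih0 (mul_le_mul_of_nonneg_right hdep0 hV0)
          have hjensen : p j * varOf p E1 + (1 - p j) * varOf p E0
              ≤ 1 - (p j * e1 + (1 - p j) * e0)^2 := by
            unfold varOf
            rw [← he1, ← he0]
            nlinarith [sq_nonneg (e1 - e0), mul_nonneg hπ0 (by linarith : (0:ℝ) ≤ 1 - p j)]
          have hvarF : varOf p F = 1 - (p j * e1 + (1 - p j) * e0)^2 := by
            unfold varOf
            rw [hexp]
          -- final assembly
          have hstep1 : 2 * totalInf p F
              = 4 * p j * (1 - p j) * d + (p j * (2 * totalInf p E1) + (1 - p j) * (2 * totalInf p E0)) := by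
            rw [hti, hinflj]
            ring
          have hstep2 : p j * (2 * totalInf p E1) ≤ p j * ((D - 1) * varOf p E1) :=
            mul_le_mul_of_nonneg_left hIH1 hπ0
          have hstep3 : (1 - p j) * (2 * totalInf p E0) ≤ (1 - p j) * ((D - 1) * varOf p E0) :=
            mul_le_mul_of_nonneg_left hIH0 (by linarith)
          have hstep4 : p j * ((D - 1) * varOf p E1) + (1 - p j) * ((D - 1) * varOf p E0)
              = (D - 1) * (p j * varOf p E1 + (1 - p j) * varOf p E0) := by ring
          have hstep5 : (D - 1) * (p j * varOf p E1 + (1 - p j) * varOf p E0)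
              ≤ (D - 1) * (1 - (p j * e1 + (1 - p j) * e0)^2) :=
            mul_le_mul_of_nonneg_left hjensen (by linarith)
          rw [hvarF]
          linarith [hcore, hstep1, hstep2, hstep3, hstep4, hstep5]

end ScoreAux
namespace ScoreAux

open Finset Function

variable {n : ℕ} {L : Type}

lemma prEvent_nonneg {p : Fin n → ℝ} (hp : ∀ i, 0 ≤ p i ∧ p i ≤ 1) (E : (Fin n → Bool) → Prop) :
    0 ≤ prEvent p E := by
  apply Finset.sum_nonneg
  intro x _
  split
  · exact prMass_nonneg hp x
  · exact le_refl 0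

lemma follow_mem_leafAddrs (T : DTree n L) (x : Fin n → Bool) :
    T.follow x ∈ T.leafAddrs := by
  induction T with
  | leaf l => simp [DTree.follow, DTree.leafAddrs]
  | node i t0 t1 ih0 ih1 =>
      simp only [DTree.follow, DTree.leafAddrs, List.mem_append, List.mem_map]
      cases hx : x i
      · exact Or.inl ⟨t0.follow x, ih0, by simp⟩
      · exact Or.inr ⟨t1.follow x, ih1, by simp⟩

lemma list_sum_swap (l : List (List Bool)) (G : List Bool → (Fin n → Bool) → ℝ) :
    (l.map (fun s => ∑ x : Fin n → Bool, G s x)).sum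
      = ∑ x : Fin n → Bool, (l.map (fun s => G s x)).sum := by
  induction l with
  | nil => simp
  | cons s l ih =>
      simp only [List.map_cons, List.sum_cons, ih, ← Finset.sum_add_distrib]

lemma avgE_le_avgDepth {p : Fin n → ℝ} (hp : ∀ i, 0 ≤ p i ∧ p i ≤ 1) (T : DTree n L) :
    avgE p T ≤ avgDepth p T := by
  have had : avgDepth p T = ∑ x : Fin n → Bool,
      (T.leafAddrs.map (fun s =>
        (if T.follow x = s then prMass p x else 0) * (s.length : ℝ))).sum := by
    unfold avgDepth reachLeaf prEvent
    rw [← list_sum_swap]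
    congr 1
    apply List.map_congr_left
    intro s _
    rw [Finset.sum_mul]
    exact Finset.sum_congr rfl fun i _ => by simp
  rw [had]
  unfold avgE
  apply Finset.sum_le_sum
  intro x _
  have hm := follow_mem_leafAddrs T x
  have hmem := List.mem_map_of_mem (f := fun s =>
    (if T.follow x = s then prMass p x else 0) * (s.length : ℝ)) hm
  have hval : (if T.follow x = T.follow x then prMass p x else 0) * ((T.follow x).length : ℝ)
      = prMass p x * ((T.follow x).length : ℝ) := by rw [if_pos rfl]
  rw [← hval]
  apply List.single_le_sum _ _ hmem
  intro r hr
  rcases List.mem_map.1 hr with ⟨s, _, rfl⟩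
  apply mul_nonneg
  · split
    · exact prMass_nonneg hp x
    · exact le_refl 0
  · exact Nat.cast_nonneg _

lemma avgDepth_nonneg {p : Fin n → ℝ} (hp : ∀ i, 0 ≤ p i ∧ p i ≤ 1) (T : DTree n L) :
    0 ≤ avgDepth p T := by
  apply List.sum_nonneg
  intro r hr
  rcases List.mem_map.1 hr with ⟨s, _, rfl⟩
  exact mul_nonneg (prEvent_nonneg hp _) (by positivity)

/-- the per-leaf chain: total influence is at most `D·Δ·maxInf`. -/
lemma keyPerLeaf {p : Fin n → ℝ} (hp : ∀ i, 0 ≤ p i ∧ p i ≤ 1)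
    (g : (Fin n → Bool) → Bool) (Tl : DTree n Bool) (heq : ∀ x, Tl.eval x = g x)
    (Dopt Δopt : ℝ) (hD : (Tl.depth : ℝ) ≤ Dopt) (hΔ : avgDepth p Tl ≤ Δopt) :
    totalInf p g ≤ Dopt * Δopt * maxInf p g := by
  have hg : (fun x => Tl.eval x) = g := funext heq
  set M := maxInf p g with hM
  have hM0 : 0 ≤ M := maxInf_nonneg hp g
  have hrev := revPoincare hp (tsize Tl) Tl le_rfl
  rw [hg] at hrev
  have hosss := osss hp (tsize Tl) Tl g M le_rfl (fun i => infl_le_maxInf p i g)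
  rw [hg] at hosss
  rw [pd_self, zero_add] at hosss
  have hvar : varOf p g ≤ 2 * (M * avgE p Tl) := by
    rw [varOf_eq_two_pdd]
    linarith
  have hdep0 : (0:ℝ) ≤ (Tl.depth : ℝ) := Nat.cast_nonneg _
  have havgE0 : 0 ≤ avgE p Tl := avgE_nonneg hp Tl
  have h1 : 2 * totalInf p g ≤ (Tl.depth : ℝ) * (2 * (M * avgE p Tl)) :=
    le_trans hrev (mul_le_mul_of_nonneg_left hvar hdep0)
  have h2 : (Tl.depth : ℝ) * (M * avgE p Tl) ≤ Dopt * (M * avgE p Tl) :=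
    mul_le_mul_of_nonneg_right hD (mul_nonneg hM0 havgE0)
  have hDopt0 : 0 ≤ Dopt := le_trans hdep0 hD
  have h3 : M * avgE p Tl ≤ M * Δopt :=
    mul_le_mul_of_nonneg_left (le_trans (avgE_le_avgDepth hp Tl) hΔ) hM0
  have h4 : Dopt * (M * avgE p Tl) ≤ Dopt * (M * Δopt) :=
    mul_le_mul_of_nonneg_left h3 hDopt0
  have h5 : Dopt * (M * Δopt) = Dopt * Δopt * M := by ring
  linarith

end ScoreAux
/-- **Score lower bound when the cost is high.** If every leaf subfunction
of the bare tree `T°` is computable by a decision tree of depth at most `D_opt` and average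
depth at most `Δ_opt`, then the leaf of maximum score has score at least
`cost(T°)/(j·D_opt·Δ_opt)`, where `j` is the number of leaves of `T°`. -/
theorem score_lower_bound_high_cost {n : ℕ} (p : Fin n → ℝ)
    (hp : ∀ i, 0 ≤ p i ∧ p i ≤ 1)
    (f : (Fin n → Bool) → Bool) (T : DTree n Unit) (Dopt Δopt : ℝ)
    (hleaf : ∀ s ∈ T.leafAddrs, ∃ Tl : DTree n Bool,
      (∀ x, Tl.eval x = subFun f T s x) ∧ (Tl.depth : ℝ) ≤ Dopt ∧ avgDepth p Tl ≤ Δopt)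
    (sstar : List Bool) (hsstar : sstar ∈ T.leafAddrs)
    (hmax : ∀ t ∈ T.leafAddrs, score p f T t ≤ score p f T sstar) :
    cost p f T / ((T.leafAddrs.length : ℝ) * Dopt * Δopt) ≤ score p f T sstar := by
  classical
  have hscore0 : 0 ≤ score p f T sstar :=
    mul_nonneg (ScoreAux.prEvent_nonneg hp _) (ScoreAux.maxInf_nonneg hp _)
  obtain ⟨Tl0, _, hD0, hΔ0⟩ := hleaf sstar hsstar
  have hDopt0 : 0 ≤ Dopt := le_trans (Nat.cast_nonneg _) hD0
  have hΔopt0 : 0 ≤ Δopt := le_trans (ScoreAux.avgDepth_nonneg hp Tl0) hΔ0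
  have hlen0 : (0:ℝ) ≤ (T.leafAddrs.length : ℝ) := Nat.cast_nonneg _
  -- cost bound
  have hcost : cost p f T ≤ (T.leafAddrs.length : ℝ) * Dopt * Δopt * score p f T sstar := by
    have hstep1 : cost p f T
        ≤ (T.leafAddrs.map (fun s => Dopt * Δopt * score p f T s)).sum := by
      unfold cost
      apply List.sum_le_sum
      intro s hs
      obtain ⟨Tl, heq, hD, hΔ⟩ := hleaf s hs
      have hkey := ScoreAux.keyPerLeaf hp (subFun f T s) Tl heq Dopt Δopt hD hΔ
      have hreach0 : 0 ≤ reachLeaf p T s := ScoreAux.prEvent_nonneg hp _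
      have := mul_le_mul_of_nonneg_left hkey hreach0
      unfold score
      nlinarith [this]
    have hstep2 : (T.leafAddrs.map (fun s => Dopt * Δopt * score p f T s)).sum
        = Dopt * Δopt * (T.leafAddrs.map (fun s => score p f T s)).sum := by
      induction T.leafAddrs with
      | nil => simp
      | cons a l ih => simp only [List.map_cons, List.sum_cons, ih]; ring
    have hstep3 : (T.leafAddrs.map (fun s => score p f T s)).sum
        ≤ (T.leafAddrs.length : ℝ) * score p f T sstar := by
      have := List.sum_le_card_nsmul (T.leafAddrs.map (fun s => score p f T s))
        (score p f T sstar) ?_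
      · rwa [List.length_map, nsmul_eq_mul] at this
      · intro r hr
        rcases List.mem_map.1 hr with ⟨s, hs, rfl⟩
        exact hmax s hs
    have h4 : Dopt * Δopt * (T.leafAddrs.map (fun s => score p f T s)).sum
        ≤ Dopt * Δopt * ((T.leafAddrs.length : ℝ) * score p f T sstar) :=
      mul_le_mul_of_nonneg_left hstep3 (mul_nonneg hDopt0 hΔopt0)
    calc cost p f T ≤ (T.leafAddrs.map (fun s => Dopt * Δopt * score p f T s)).sum := hstep1
      _ = Dopt * Δopt * (T.leafAddrs.map (fun s => score p f T s)).sum := hstep2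
      _ ≤ Dopt * Δopt * ((T.leafAddrs.length : ℝ) * score p f T sstar) := h4
      _ = (T.leafAddrs.length : ℝ) * Dopt * Δopt * score p f T sstar := by ring
  have hK0 : 0 ≤ (T.leafAddrs.length : ℝ) * Dopt * Δopt :=
    mul_nonneg (mul_nonneg hlen0 hDopt0) hΔopt0
  rcases eq_or_lt_of_le hK0 with h | h
  · rw [← h, div_zero]
    exact hscore0
  · rw [div_le_iff₀ h]
    nlinarith [hcost]
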